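/- Let ε₀ > 0 satisfy E[N₁] ≥ ε₀ I_d and let ε ∈ (0, ε₀/2). Then the sequence of d×d matrices defined by L_0^ε = O and L_{k+1}^ε = E[N₁ + A₁ᵀ π(L_k^ε) A₁] − ε I_d is monotone increasing in the Loewner order: L_k^ε ≤ L_{k+1}^ε for all k ≥ 0. -/

import Mathlib

open MeasureTheory Matrix Filter ProbabilityTheory
open scoped ENNReal NNReal

noncomputable section

instance matrixMeasurableSpace {I J : Type*} : MeasurableSpace (Matrix I J ℝ) :=
  inferInstanceAs (MeasurableSpace (I → J → ℝ))

/-- The Schur-complement map `π(P) = P_xx − P_xu P_uu⁻¹ P_ux`. -/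
def piMap {n m : ℕ} (P : Matrix (Fin n ⊕ Fin m) (Fin n ⊕ Fin m) ℝ) :
    Matrix (Fin n) (Fin n) ℝ :=
  P.toBlocks₁₁ - P.toBlocks₁₂ * P.toBlocks₂₂⁻¹ * P.toBlocks₂₁

/-- The feedback-gain map `Γ(P) = −P_uu⁻¹ P_ux`. -/
def gammaMap {n m : ℕ} (P : Matrix (Fin n ⊕ Fin m) (Fin n ⊕ Fin m) ℝ) :
    Matrix (Fin m) (Fin n) ℝ :=
  -(P.toBlocks₂₂⁻¹ * P.toBlocks₂₁)

/-- Loewner order: `X ≤ Y` iff `Y - X` is positive semidefinite. -/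
def loewnerLE {I : Type*} [Fintype I] (X Y : Matrix I I ℝ) : Prop :=
  (Y - X).PosSemidef

/-- Spectral norm (`2`-norm) of a real matrix. -/
def specNorm {I J : Type*} [Fintype I] [Fintype J] [DecidableEq J]
    (M : Matrix I J ℝ) : ℝ :=
  ‖LinearMap.toContinuousLinearMap (Matrix.toEuclideanLin M)‖

/-- Entrywise expectation of a random matrix. -/
def matExp {Ω : Type*} [MeasurableSpace Ω] (μpr : Measure Ω) {I J : Type*}
    (M : Ω → Matrix I J ℝ) : Matrix I J ℝ :=
  Matrix.of fun i j => ∫ ω, M ω i j ∂μpr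

section LQ

variable {n m : ℕ} {Ω : Type*} [MeasurableSpace Ω]

/-- The filtration `𝓕_t = σ(A_s, N_s : 1 ≤ s ≤ t)` (with `𝓕_0` trivial). -/
def lqFiltration (A : ℕ → Ω → Matrix (Fin n) (Fin n ⊕ Fin m) ℝ)
    (N : ℕ → Ω → Matrix (Fin n ⊕ Fin m) (Fin n ⊕ Fin m) ℝ) :
    ℕ → MeasurableSpace Ω := fun t =>
  ⨆ s ∈ Finset.Icc 1 t, MeasurableSpace.comap (fun ω => (A s ω, N s ω)) inferInstance

/-- A control is admissible if it is adapted to the filtration. -/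
def Admissible {k : ℕ} (F : ℕ → MeasurableSpace Ω) (u : ℕ → Ω → Fin k → ℝ) : Prop :=
  ∀ t, @Measurable Ω (Fin k → ℝ) (F t) _ (u t)

/-- The state process `x_0 = x`, `x_{t+1} = A_{t+1} [x_t; u_t]`. -/
def statePath (A : ℕ → Ω → Matrix (Fin n) (Fin n ⊕ Fin m) ℝ)
    (x : Fin n → ℝ) (u : ℕ → Ω → Fin m → ℝ) : ℕ → Ω → Fin n → ℝ
  | 0 => fun _ => x
  | t + 1 => fun ω => A (t + 1) ω *ᵥ Sum.elim (statePath A x u t ω) (u t ω)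

/-- The stage cost `[x_tᵀ, u_tᵀ] N_{t+1} [x_t; u_t]`. -/
def stageCost (A : ℕ → Ω → Matrix (Fin n) (Fin n ⊕ Fin m) ℝ)
    (N : ℕ → Ω → Matrix (Fin n ⊕ Fin m) (Fin n ⊕ Fin m) ℝ)
    (x : Fin n → ℝ) (u : ℕ → Ω → Fin m → ℝ) (t : ℕ) (ω : Ω) : ℝ :=
  Sum.elim (statePath A x u t ω) (u t ω) ⬝ᵥ
    (N (t + 1) ω *ᵥ Sum.elim (statePath A x u t ω) (u t ω))

/-- The total cost `J(x, u) ∈ [0,∞]`. -/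
def costJ (A : ℕ → Ω → Matrix (Fin n) (Fin n ⊕ Fin m) ℝ)
    (N : ℕ → Ω → Matrix (Fin n ⊕ Fin m) (Fin n ⊕ Fin m) ℝ)
    (x : Fin n → ℝ) (u : ℕ → Ω → Fin m → ℝ) (ω : Ω) : ℝ≥0∞ :=
  ∑' t, ENNReal.ofReal (stageCost A N x u t ω)

/-- The value function `V(x) = inf over admissible u of E[J(x,u)]`. -/
def valueV (μpr : Measure Ω) (A : ℕ → Ω → Matrix (Fin n) (Fin n ⊕ Fin m) ℝ)
    (N : ℕ → Ω → Matrix (Fin n ⊕ Fin m) (Fin n ⊕ Fin m) ℝ)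
    (x : Fin n → ℝ) : ℝ≥0∞ :=
  ⨅ (u : ℕ → Ω → Fin m → ℝ) (_ : Admissible (lqFiltration A N) u),
    ∫⁻ ω, costJ A N x u ω ∂μpr

/-- The Riccati iteration `K_0 = O`, `K_{t+1} = π(E[N₁ + A₁ᵀ K_t A₁])`. -/
def Kseq (μpr : Measure Ω) (A : ℕ → Ω → Matrix (Fin n) (Fin n ⊕ Fin m) ℝ)
    (N : ℕ → Ω → Matrix (Fin n ⊕ Fin m) (Fin n ⊕ Fin m) ℝ) :
    ℕ → Matrix (Fin n) (Fin n) ℝ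
  | 0 => 0
  | t + 1 => piMap (matExp μpr (fun ω => N 1 ω + (A 1 ω)ᵀ * Kseq μpr A N t * A 1 ω))

/-- The Q-learning process of Algorithm 1. -/
def Qproc (A : ℕ → Ω → Matrix (Fin n) (Fin n ⊕ Fin m) ℝ)
    (N : ℕ → Ω → Matrix (Fin n ⊕ Fin m) (Fin n ⊕ Fin m) ℝ)
    (α : ℕ → Ω → ℝ) (Q0 : Matrix (Fin n ⊕ Fin m) (Fin n ⊕ Fin m) ℝ) :
    ℕ → Ω → Matrix (Fin n ⊕ Fin m) (Fin n ⊕ Fin m) ℝ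
  | 0 => fun _ => Q0
  | t + 1 => fun ω =>
      Qproc A N α Q0 t ω + α t ω •
        (N (t + 1) ω + (A (t + 1) ω)ᵀ * piMap (Qproc A N α Q0 t ω) * A (t + 1) ω
          - Qproc A N α Q0 t ω)

end LQ

/-- The lower-bound iteration `L_0^ε = O`, `L_{k+1}^ε = E[N₁ + A₁ᵀ π(L_k^ε) A₁] − ε I_d`. -/
def Lseq {n m : ℕ} {Ω : Type*} [MeasurableSpace Ω] (μpr : Measure Ω)
    (A : ℕ → Ω → Matrix (Fin n) (Fin n ⊕ Fin m) ℝ)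
    (N : ℕ → Ω → Matrix (Fin n ⊕ Fin m) (Fin n ⊕ Fin m) ℝ) (ε : ℝ) :
    ℕ → Matrix (Fin n ⊕ Fin m) (Fin n ⊕ Fin m) ℝ
  | 0 => 0
  | k + 1 =>
      matExp μpr (fun ω => N 1 ω + (A 1 ω)ᵀ * piMap (Lseq μpr A N ε k) * A 1 ω) - ε • 1

set_option linter.unusedSectionVars false

namespace LseqAux

open scoped Matrix.Norms.L2Operator

section NormFacts

variable {I J : Type*} [Fintype I] [Fintype J] [DecidableEq I] [DecidableEq J]

lemma specNorm_eq (M : Matrix I J ℝ) : specNorm M = ‖M‖ := by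
  rw [Matrix.l2_opNorm_def]; rfl

lemma specNorm_nonneg (M : Matrix I J ℝ) : 0 ≤ specNorm M := by
  rw [specNorm_eq]; exact norm_nonneg M

lemma coord_le (y : EuclideanSpace ℝ I) (i : I) : |y i| ≤ ‖y‖ := by
  rw [EuclideanSpace.norm_eq, ← Real.sqrt_sq_eq_abs]
  apply Real.sqrt_le_sqrt
  have := Finset.single_le_sum (f := fun j => ‖y j‖ ^ 2)
    (fun j _ => sq_nonneg _) (Finset.mem_univ i)
  simpa [Real.norm_eq_abs, sq_abs] using this

lemma abs_entry_le (M : Matrix I J ℝ) (i : I) (j : J) : |M i j| ≤ specNorm M := by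
  rw [specNorm_eq]
  have h1 : ((EuclideanSpace.equiv I ℝ).symm
      (M *ᵥ (EuclideanSpace.single j (1:ℝ) : EuclideanSpace ℝ J))) i = M i j := by
    simp [Matrix.mulVec, dotProduct, EuclideanSpace.single_apply]
  calc |M i j| = |((EuclideanSpace.equiv I ℝ).symm
        (M *ᵥ (EuclideanSpace.single j (1:ℝ) : EuclideanSpace ℝ J))) i| := by rw [h1]
    _ ≤ ‖(EuclideanSpace.equiv I ℝ).symm
        (M *ᵥ (EuclideanSpace.single j (1:ℝ) : EuclideanSpace ℝ J))‖ := coord_le _ i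
    _ ≤ ‖M‖ * ‖(EuclideanSpace.single j (1:ℝ) : EuclideanSpace ℝ J)‖ :=
        Matrix.l2_opNorm_mulVec M _
    _ = ‖M‖ := by rw [EuclideanSpace.norm_single]; simp

lemma transpose_eq_conjTranspose (M : Matrix I J ℝ) : Mᵀ = Mᴴ := by
  ext i j; simp [Matrix.conjTranspose_apply]

lemma specNorm_AXA_le (A : Matrix I J ℝ) (X : Matrix I I ℝ) :
    specNorm (Aᵀ * X * A) ≤ specNorm X * specNorm (Aᵀ * A) := by
  simp only [specNorm_eq]
  have hmul2 : ‖Aᵀ * X‖ ≤ ‖Aᵀ‖ * ‖X‖ := Matrix.l2_opNorm_mul _ _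
  have hA : (0:ℝ) ≤ ‖A‖ := norm_nonneg _
  calc ‖Aᵀ * X * A‖ ≤ ‖Aᵀ * X‖ * ‖A‖ := Matrix.l2_opNorm_mul _ _
    _ ≤ ‖Aᵀ‖ * ‖X‖ * ‖A‖ := mul_le_mul_of_nonneg_right hmul2 hA
    _ = ‖X‖ * (‖A‖ * ‖A‖) := by
        rw [transpose_eq_conjTranspose, Matrix.l2_opNorm_conjTranspose]; ring
    _ = ‖X‖ * ‖Aᵀ * A‖ := by
        rw [transpose_eq_conjTranspose, Matrix.l2_opNorm_conjTranspose_mul_self]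

end NormFacts

section Star

lemma star_eq {κ : Type*} (v : κ → ℝ) : star v = v := funext fun _ => star_trivial _

end Star

section MatExp

variable {Ω : Type*} [MeasurableSpace Ω] {μ : Measure Ω}
variable {I : Type*} [Fintype I] [DecidableEq I]

lemma matExp_apply (f : Ω → Matrix I I ℝ) (i j : I) :
    matExp μ f i j = ∫ ω, f ω i j ∂μ := rfl

lemma isHermitian_of_symm {M : Matrix I I ℝ} (h : ∀ i j, M i j = M j i) :
    M.IsHermitian := by
  ext i j
  simp only [Matrix.conjTranspose_apply, star_trivial]
  exact h j i

lemma matExp_isHermitian {f : Ω → Matrix I I ℝ} (h : ∀ ω, (f ω).IsHermitian) :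
    (matExp μ f).IsHermitian := by
  refine isHermitian_of_symm fun i j => ?_
  simp only [matExp_apply]
  congr 1
  funext ω
  have := (h ω).apply j i
  rwa [star_trivial] at this

lemma quad_expand (M : Matrix I I ℝ) (x : I → ℝ) :
    x ⬝ᵥ (M *ᵥ x) = ∑ i, ∑ j, x i * x j * M i j := by
  simp only [dotProduct, Matrix.mulVec, Finset.mul_sum]
  exact Finset.sum_congr rfl fun i _ => Finset.sum_congr rfl fun j _ => by ring

lemma matExp_quad {f : Ω → Matrix I I ℝ}
    (hf : ∀ i j, Integrable (fun ω => f ω i j) μ) (x : I → ℝ) :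
    x ⬝ᵥ (matExp μ f *ᵥ x) = ∫ ω, x ⬝ᵥ (f ω *ᵥ x) ∂μ := by
  rw [quad_expand]
  rw [show (fun ω => x ⬝ᵥ (f ω *ᵥ x)) = fun ω => ∑ i, ∑ j, x i * x j * f ω i j from
    funext fun ω => quad_expand (f ω) x]
  rw [MeasureTheory.integral_finset_sum _
    (fun i _ => integrable_finset_sum _ (fun j _ => (hf i j).const_mul _))]
  refine Finset.sum_congr rfl fun i _ => ?_
  rw [MeasureTheory.integral_finset_sum _ (fun j _ => (hf i j).const_mul _)]
  refine Finset.sum_congr rfl fun j _ => ?_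
  rw [integral_const_mul]
  rfl

lemma matExp_posSemidef {f : Ω → Matrix I I ℝ} (hpsd : ∀ ω, (f ω).PosSemidef)
    (hf : ∀ i j, Integrable (fun ω => f ω i j) μ) :
    (matExp μ f).PosSemidef := by
  refine Matrix.PosSemidef.of_dotProduct_mulVec_nonneg (matExp_isHermitian (fun ω => (hpsd ω).1)) fun x => ?_
  rw [star_eq, matExp_quad hf]
  refine MeasureTheory.integral_nonneg fun ω => ?_
  have h := (hpsd ω).dotProduct_mulVec_nonneg x
  rwa [star_eq] at h

lemma matExp_add {f g : Ω → Matrix I I ℝ}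
    (hf : ∀ i j, Integrable (fun ω => f ω i j) μ)
    (hg : ∀ i j, Integrable (fun ω => g ω i j) μ) :
    matExp μ (fun ω => f ω + g ω) = matExp μ f + matExp μ g := by
  ext i j
  simp only [matExp_apply, Matrix.add_apply]
  exact MeasureTheory.integral_add (hf i j) (hg i j)

lemma matExp_sub {f g : Ω → Matrix I I ℝ}
    (hf : ∀ i j, Integrable (fun ω => f ω i j) μ)
    (hg : ∀ i j, Integrable (fun ω => g ω i j) μ) :
    matExp μ (fun ω => f ω - g ω) = matExp μ f - matExp μ g := by
  ext i j
  simp only [matExp_apply, Matrix.sub_apply]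
  exact MeasureTheory.integral_sub (hf i j) (hg i j)

lemma matExp_mono {f g : Ω → Matrix I I ℝ}
    (hf : ∀ i j, Integrable (fun ω => f ω i j) μ)
    (hg : ∀ i j, Integrable (fun ω => g ω i j) μ)
    (h : ∀ ω, loewnerLE (f ω) (g ω)) :
    loewnerLE (matExp μ f) (matExp μ g) := by
  unfold loewnerLE
  rw [← matExp_sub hg hf]
  exact matExp_posSemidef (fun ω => h ω) (fun i j => (hg i j).sub (hf i j))

end MatExp

section Loewner

variable {I : Type*} [Fintype I] [DecidableEq I]

lemma loewnerLE_trans {a b c : Matrix I I ℝ} (h1 : loewnerLE a b) (h2 : loewnerLE b c) :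
    loewnerLE a c := by
  have := h2.add h1
  unfold loewnerLE
  rwa [sub_add_sub_cancel] at this

lemma smul_one_posDef {c : ℝ} (hc : 0 < c) : (c • (1 : Matrix I I ℝ)).PosDef := by
  rw [Matrix.smul_one_eq_diagonal]
  exact Matrix.PosDef.diagonal fun _ => hc

lemma posDef_of_loewner {c : ℝ} (hc : 0 < c) {L : Matrix I I ℝ}
    (h : loewnerLE (c • (1 : Matrix I I ℝ)) L) : L.PosDef := by
  have h2 := (smul_one_posDef (I := I) hc).add_posSemidef h
  rwa [add_sub_cancel] at h2

end Loewner

section Schur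

variable {nn mm : ℕ}
variable {P Q : Matrix (Fin nn ⊕ Fin mm) (Fin nn ⊕ Fin mm) ℝ}

lemma piMap_zero' : piMap (0 : Matrix (Fin nn ⊕ Fin mm) (Fin nn ⊕ Fin mm) ℝ) = 0 := by
  have h21 : (0 : Matrix (Fin nn ⊕ Fin mm) (Fin nn ⊕ Fin mm) ℝ).toBlocks₂₁ = 0 := rfl
  have h11 : (0 : Matrix (Fin nn ⊕ Fin mm) (Fin nn ⊕ Fin mm) ℝ).toBlocks₁₁ = 0 := rfl
  rw [piMap, h21, h11, Matrix.mul_zero, sub_zero]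

lemma toBlocks21_eq (hP : P.IsHermitian) : P.toBlocks₂₁ = P.toBlocks₁₂ᴴ := by
  ext i j
  simp only [Matrix.toBlocks₂₁, Matrix.toBlocks₁₂, Matrix.conjTranspose_apply,
    Matrix.of_apply, star_trivial]
  have := hP.apply (Sum.inr i) (Sum.inl j)
  rw [star_trivial] at this
  exact this.symm

lemma fromBlocks_eq (hP : P.IsHermitian) :
    P = Matrix.fromBlocks P.toBlocks₁₁ P.toBlocks₁₂ P.toBlocks₁₂ᴴ P.toBlocks₂₂ := by
  rw [← toBlocks21_eq hP, Matrix.fromBlocks_toBlocks]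

lemma toBlocks11_isHermitian (hP : P.IsHermitian) : P.toBlocks₁₁.IsHermitian := by
  ext i j
  simp only [Matrix.toBlocks₁₁, Matrix.conjTranspose_apply, Matrix.of_apply, star_trivial]
  have := hP.apply (Sum.inl i) (Sum.inl j)
  rwa [star_trivial] at this

lemma toBlocks22_isHermitian (hP : P.IsHermitian) : P.toBlocks₂₂.IsHermitian := by
  ext i j
  simp only [Matrix.toBlocks₂₂, Matrix.conjTranspose_apply, Matrix.of_apply, star_trivial]
  have := hP.apply (Sum.inr i) (Sum.inr j)
  rwa [star_trivial] at this

lemma toBlocks22_posDef (hP : P.PosDef) : P.toBlocks₂₂.PosDef := by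
  refine Matrix.PosDef.of_dotProduct_mulVec_pos (toBlocks22_isHermitian hP.1) fun v hv => ?_
  have hvs : (Sum.elim (0 : Fin nn → ℝ) v) ≠ 0 := by
    intro h
    apply hv
    funext j
    exact congrFun h (Sum.inr j)
  have h2 := hP.dotProduct_mulVec_pos hvs
  rw [star_eq] at h2
  have hrw : Sum.elim (0 : Fin nn → ℝ) v ⬝ᵥ (P *ᵥ Sum.elim (0 : Fin nn → ℝ) v)
      = v ⬝ᵥ (P.toBlocks₂₂ *ᵥ v) := by
    conv_lhs => rw [← Matrix.fromBlocks_toBlocks P]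
    rw [Matrix.fromBlocks_mulVec, sumElim_dotProduct_sumElim]
    simp [Matrix.mulVec_zero]
  rw [hrw] at h2
  rw [star_eq]
  exact h2

lemma piMap_isHermitian (hP : P.IsHermitian) : (piMap P).IsHermitian := by
  unfold piMap
  rw [toBlocks21_eq hP]
  exact (toBlocks11_isHermitian hP).sub
    (Matrix.isHermitian_mul_mul_conjTranspose _ (toBlocks22_isHermitian hP).inv)

lemma schur_key (hP : P.IsHermitian) (hD : P.toBlocks₂₂.PosDef) (x : Fin nn → ℝ) (y : Fin mm → ℝ) :
    Sum.elim x y ⬝ᵥ (P *ᵥ Sum.elim x y) =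
      ((P.toBlocks₂₂⁻¹ * P.toBlocks₂₁) *ᵥ x + y) ⬝ᵥ
          (P.toBlocks₂₂ *ᵥ ((P.toBlocks₂₂⁻¹ * P.toBlocks₂₁) *ᵥ x + y))
        + x ⬝ᵥ (piMap P *ᵥ x) := by
  haveI : Invertible P.toBlocks₂₂ :=
    Matrix.invertibleOfIsUnitDet _ (isUnit_iff_ne_zero.mpr hD.det_pos.ne')
  have key := Matrix.schur_complement_eq₂₂ (α := ℝ)
    P.toBlocks₁₁ P.toBlocks₁₂ x y (toBlocks22_isHermitian hP)
  rw [star_eq, star_eq, star_eq] at key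
  simp only [← Matrix.dotProduct_mulVec] at key
  rw [← toBlocks21_eq hP] at key
  conv_lhs => rw [← Matrix.fromBlocks_toBlocks P]
  rw [key]
  rfl

lemma piMap_quad_le (hP : P.IsHermitian) (hD : P.toBlocks₂₂.PosDef)
    (x : Fin nn → ℝ) (y : Fin mm → ℝ) :
    x ⬝ᵥ (piMap P *ᵥ x) ≤ Sum.elim x y ⬝ᵥ (P *ᵥ Sum.elim x y) := by
  rw [schur_key hP hD x y]
  have hnn := hD.posSemidef.dotProduct_mulVec_nonneg ((P.toBlocks₂₂⁻¹ * P.toBlocks₂₁) *ᵥ x + y)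
  rw [star_eq] at hnn
  linarith

lemma piMap_quad_eq (hP : P.IsHermitian) (hD : P.toBlocks₂₂.PosDef) (x : Fin nn → ℝ) :
    x ⬝ᵥ (piMap P *ᵥ x)
      = Sum.elim x (-((P.toBlocks₂₂⁻¹ * P.toBlocks₂₁) *ᵥ x)) ⬝ᵥ
          (P *ᵥ Sum.elim x (-((P.toBlocks₂₂⁻¹ * P.toBlocks₂₁) *ᵥ x))) := by
  rw [schur_key hP hD x _]
  simp

lemma piMap_posSemidef (hP : P.PosDef) : (piMap P).PosSemidef := by
  refine Matrix.PosSemidef.of_dotProduct_mulVec_nonneg (piMap_isHermitian hP.1) fun x => ?_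
  rw [star_eq, piMap_quad_eq hP.1 (toBlocks22_posDef hP)]
  have := hP.posSemidef.dotProduct_mulVec_nonneg (Sum.elim x (-((P.toBlocks₂₂⁻¹ * P.toBlocks₂₁) *ᵥ x)))
  rwa [star_eq] at this

lemma piMap_mono (hP : P.IsHermitian) (hQ : Q.IsHermitian)
    (hPD : P.toBlocks₂₂.PosDef) (hQD : Q.toBlocks₂₂.PosDef)
    (hPQ : loewnerLE P Q) : loewnerLE (piMap P) (piMap Q) := by
  refine Matrix.PosSemidef.of_dotProduct_mulVec_nonneg ((piMap_isHermitian hQ).sub (piMap_isHermitian hP)) fun x => ?_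
  rw [star_eq, Matrix.sub_mulVec, dotProduct_sub, sub_nonneg]
  set y := -((Q.toBlocks₂₂⁻¹ * Q.toBlocks₂₁) *ᵥ x) with hy
  have h1 : x ⬝ᵥ (piMap Q *ᵥ x) = Sum.elim x y ⬝ᵥ (Q *ᵥ Sum.elim x y) :=
    piMap_quad_eq hQ hQD x
  have h2 : x ⬝ᵥ (piMap P *ᵥ x) ≤ Sum.elim x y ⬝ᵥ (P *ᵥ Sum.elim x y) :=
    piMap_quad_le hP hPD x y
  have h3 := Matrix.PosSemidef.dotProduct_mulVec_nonneg hPQ (Sum.elim x y)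
  rw [star_eq, Matrix.sub_mulVec, dotProduct_sub, sub_nonneg] at h3
  linarith

end Schur

end LseqAux

/-- The lower-bound iteration is monotone increasing in the Loewner order. -/
theorem Lseq_monotone
    {n m : ℕ} {Ω : Type*} [MeasurableSpace Ω]
    (μpr : Measure Ω) [IsProbabilityMeasure μpr]
    (A : ℕ → Ω → Matrix (Fin n) (Fin n ⊕ Fin m) ℝ)
    (N : ℕ → Ω → Matrix (Fin n ⊕ Fin m) (Fin n ⊕ Fin m) ℝ)
    (hmeas : ∀ t : ℕ, Measurable fun ω => (A (t + 1) ω, N (t + 1) ω))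
    (hindep : ProbabilityTheory.iIndepFun
      (fun (t : ℕ) (ω : Ω) => (A (t + 1) ω, N (t + 1) ω)) μpr)
    (hident : ∀ t : ℕ, ProbabilityTheory.IdentDistrib
      (fun ω => (A (t + 1) ω, N (t + 1) ω)) (fun ω => (A 1 ω, N 1 ω)) μpr μpr)
    (hNpsd : ∀ (t : ℕ) (ω : Ω), (N (t + 1) ω).PosSemidef)
    (hmom : Integrable
      (fun ω => specNorm (N 1 ω) ^ 2 + specNorm ((A 1 ω)ᵀ * A 1 ω) ^ 2) μpr)
    (hENpos : (matExp μpr (N 1)).PosDef)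
    (ε₀ ε : ℝ) (hε₀ : 0 < ε₀)
    (hEN : loewnerLE (ε₀ • (1 : Matrix (Fin n ⊕ Fin m) (Fin n ⊕ Fin m) ℝ)) (matExp μpr (N 1)))
    (hε : ε ∈ Set.Ioo 0 (ε₀ / 2)) :
    ∀ k : ℕ, loewnerLE (Lseq μpr A N ε k) (Lseq μpr A N ε (k + 1)) := by
  classical
  open LseqAux in
  obtain ⟨hε1, hε2⟩ := hε
  set c : ℝ := ε₀ - ε with hc_def
  have hc : 0 < c := by simp only [hc_def]; linarith
  -- measurability of entries
  have hA1 : Measurable fun ω => A 1 ω := by simpa using (hmeas 0).fst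
  have hN1 : Measurable fun ω => N 1 ω := by simpa using (hmeas 0).snd
  have hAent : ∀ k l, Measurable fun ω => A 1 ω k l := fun k l =>
    (measurable_pi_apply l).comp ((measurable_pi_apply k).comp hA1)
  -- integrable dominating function
  have hg : Integrable (fun ω => 1 + (specNorm (N 1 ω) ^ 2
      + specNorm ((A 1 ω)ᵀ * A 1 ω) ^ 2)) μpr := (integrable_const 1).add hmom
  -- integrability of entries of N
  have hintN : ∀ i j, Integrable (fun ω => N 1 ω i j) μpr := by
    intro i j
    have hm : Measurable fun ω => N 1 ω i j :=
      (measurable_pi_apply j).comp ((measurable_pi_apply i).comp hN1)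
    refine hg.mono' hm.aestronglyMeasurable (Filter.Eventually.of_forall fun ω => ?_)
    rw [Real.norm_eq_abs]
    have h1 := LseqAux.abs_entry_le (N 1 ω) i j
    have h2 := LseqAux.specNorm_nonneg (N 1 ω)
    have h3 := LseqAux.specNorm_nonneg ((A 1 ω)ᵀ * A 1 ω)
    nlinarith [sq_nonneg (specNorm (N 1 ω) - 1), sq_nonneg (specNorm ((A 1 ω)ᵀ * A 1 ω))]
  -- integrability of entries of AᵀXA
  have hintQ : ∀ (X : Matrix (Fin n) (Fin n) ℝ) i j,
      Integrable (fun ω => ((A 1 ω)ᵀ * X * A 1 ω) i j) μpr := by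
    intro X i j
    have hm : Measurable fun ω => ((A 1 ω)ᵀ * X * A 1 ω) i j := by
      simp only [Matrix.mul_apply, Matrix.transpose_apply]
      refine Finset.measurable_sum _ fun l _ => ?_
      exact (Finset.measurable_sum _ fun k _ => (hAent k i).mul_const _).mul (hAent l j)
    refine (hg.const_mul (specNorm X)).mono' hm.aestronglyMeasurable
      (Filter.Eventually.of_forall fun ω => ?_)
    rw [Real.norm_eq_abs]
    have h1 := LseqAux.abs_entry_le ((A 1 ω)ᵀ * X * A 1 ω) i j
    have h2 := LseqAux.specNorm_AXA_le (A 1 ω) X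
    have h3 := LseqAux.specNorm_nonneg ((A 1 ω)ᵀ * A 1 ω)
    have h4 := LseqAux.specNorm_nonneg X
    have h5 := LseqAux.specNorm_nonneg (N 1 ω)
    nlinarith [sq_nonneg (specNorm ((A 1 ω)ᵀ * A 1 ω) - 1), sq_nonneg (specNorm (N 1 ω))]
  have hintSum : ∀ (X : Matrix (Fin n) (Fin n) ℝ) i j,
      Integrable (fun ω => (N 1 ω + (A 1 ω)ᵀ * X * A 1 ω) i j) μpr := by
    intro X i j
    simp only [Matrix.add_apply]
    exact (hintN i j).add (hintQ X i j)
  -- pointwise positive semidefiniteness of AᵀXA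
  have hAXA : ∀ (X : Matrix (Fin n) (Fin n) ℝ), X.PosSemidef →
      ∀ ω, ((A 1 ω)ᵀ * X * A 1 ω).PosSemidef := by
    intro X hX ω
    have := hX.conjTranspose_mul_mul_same (A 1 ω)
    rwa [← LseqAux.transpose_eq_conjTranspose] at this
  -- the key lower bound step
  have hstep : ∀ (X : Matrix (Fin n) (Fin n) ℝ), X.PosSemidef →
      loewnerLE (c • (1 : Matrix (Fin n ⊕ Fin m) (Fin n ⊕ Fin m) ℝ))
        (matExp μpr (fun ω => N 1 ω + (A 1 ω)ᵀ * X * A 1 ω) - ε • 1) := by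
    intro X hX
    have hsplit : matExp μpr (fun ω => N 1 ω + (A 1 ω)ᵀ * X * A 1 ω)
        = matExp μpr (N 1) + matExp μpr (fun ω => (A 1 ω)ᵀ * X * A 1 ω) :=
      LseqAux.matExp_add hintN (hintQ X)
    unfold loewnerLE
    have hrw : matExp μpr (fun ω => N 1 ω + (A 1 ω)ᵀ * X * A 1 ω) - ε • 1
        - c • (1 : Matrix (Fin n ⊕ Fin m) (Fin n ⊕ Fin m) ℝ)
        = (matExp μpr (N 1) - ε₀ • 1)
          + matExp μpr (fun ω => (A 1 ω)ᵀ * X * A 1 ω) := by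
      rw [hsplit]
      have : (ε₀ : ℝ) • (1 : Matrix (Fin n ⊕ Fin m) (Fin n ⊕ Fin m) ℝ) = ε • 1 + c • 1 := by
        rw [← add_smul]
        congr 1
        simp [hc_def]
      rw [this]
      abel
    rw [hrw]
    exact hEN.add (LseqAux.matExp_posSemidef (hAXA X hX) (hintQ X))
  -- simultaneous induction: π(L_k) psd and c•1 ≤ L_{k+1}
  have hlow : ∀ k : ℕ, (piMap (Lseq μpr A N ε k)).PosSemidef ∧
      loewnerLE (c • (1 : Matrix (Fin n ⊕ Fin m) (Fin n ⊕ Fin m) ℝ)) (Lseq μpr A N ε (k + 1)) := by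
    intro k
    induction k with
    | zero =>
      constructor
      · rw [show Lseq μpr A N ε 0 = 0 from rfl, LseqAux.piMap_zero']
        exact Matrix.PosSemidef.zero
      · rw [show Lseq μpr A N ε 1
            = matExp μpr (fun ω => N 1 ω + (A 1 ω)ᵀ * piMap (Lseq μpr A N ε 0) * A 1 ω)
              - ε • 1 from rfl]
        rw [show Lseq μpr A N ε 0 = 0 from rfl, LseqAux.piMap_zero']
        exact hstep 0 Matrix.PosSemidef.zero
    | succ k ih =>
      have hPD : (Lseq μpr A N ε (k + 1)).PosDef := LseqAux.posDef_of_loewner hc ih.2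
      have hpsd : (piMap (Lseq μpr A N ε (k + 1))).PosSemidef := LseqAux.piMap_posSemidef hPD
      refine ⟨hpsd, ?_⟩
      rw [show Lseq μpr A N ε (k + 2)
          = matExp μpr (fun ω => N 1 ω + (A 1 ω)ᵀ * piMap (Lseq μpr A N ε (k + 1)) * A 1 ω)
            - ε • 1 from rfl]
      exact hstep _ hpsd
  have hPD : ∀ k : ℕ, (Lseq μpr A N ε (k + 1)).PosDef := fun k =>
    LseqAux.posDef_of_loewner hc (hlow k).2
  -- main monotonicity
  intro k
  induction k with
  | zero =>
    show (Lseq μpr A N ε 1 - Lseq μpr A N ε 0).PosSemidef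
    rw [show Lseq μpr A N ε 0 = 0 from rfl, sub_zero]
    exact (hPD 0).posSemidef
  | succ k ih =>
    have hmonoX : loewnerLE (piMap (Lseq μpr A N ε k)) (piMap (Lseq μpr A N ε (k + 1))) := by
      cases k with
      | zero =>
        show loewnerLE (piMap (Lseq μpr A N ε 0)) _
        rw [show Lseq μpr A N ε 0 = 0 from rfl, LseqAux.piMap_zero']
        unfold loewnerLE
        rw [sub_zero]
        exact LseqAux.piMap_posSemidef (hPD 0)
      | succ k' =>
        exact LseqAux.piMap_mono (hPD k').1 (hPD (k' + 1)).1
          (LseqAux.toBlocks22_posDef (hPD k')) (LseqAux.toBlocks22_posDef (hPD (k' + 1))) ih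
    show loewnerLE (Lseq μpr A N ε (k + 1)) (Lseq μpr A N ε (k + 2))
    rw [show Lseq μpr A N ε (k + 1)
        = matExp μpr (fun ω => N 1 ω + (A 1 ω)ᵀ * piMap (Lseq μpr A N ε k) * A 1 ω)
          - ε • 1 from rfl,
      show Lseq μpr A N ε (k + 2)
        = matExp μpr (fun ω => N 1 ω + (A 1 ω)ᵀ * piMap (Lseq μpr A N ε (k + 1)) * A 1 ω)
          - ε • 1 from rfl]
    unfold loewnerLE
    rw [sub_sub_sub_cancel_right]
    refine LseqAux.matExp_mono (hintSum _) (hintSum _) fun ω => ?_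
    unfold loewnerLE
    have hrw : (N 1 ω + (A 1 ω)ᵀ * piMap (Lseq μpr A N ε (k + 1)) * A 1 ω)
        - (N 1 ω + (A 1 ω)ᵀ * piMap (Lseq μpr A N ε k) * A 1 ω)
        = (A 1 ω)ᵀ * (piMap (Lseq μpr A N ε (k + 1)) - piMap (Lseq μpr A N ε k)) * A 1 ω := by
      rw [Matrix.mul_sub, Matrix.sub_mul]
      abel
    rw [hrw]
    have := hmonoX.conjTranspose_mul_mul_same (A 1 ω)
    rwa [← LseqAux.transpose_eq_conjTranspose] at this


end
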